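/- With K*(X) = |⋃_{x∈X} D(x)| and I*(X:Y|Z) defined as K*(X∪Z) − K*(Z) − K*(X∪Y∪Z) + K*(Y∪Z): syntactic conditional independence I*(X:Y|Z) = 0 holds if and only if D_X ∩ D_Y ⊆ D_Z, where D_X = ⋃_{x∈X} D(x). -/
import Mathlib


theorem stmt_6 {α β : Type*} [DecidableEq α] [DecidableEq β] (D : α → Finset β) :
    ∀ X Y Z : Finset α,
      ((((X ∪ Z).biUnion D).card : ℤ) - ((Z.biUnion D).card : ℤ)
        - (((X ∪ Y ∪ Z).biUnion D).card : ℤ) + (((Y ∪ Z).biUnion D).card : ℤ)) = 0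
      ↔ X.biUnion D ∩ Y.biUnion D ⊆ Z.biUnion D := by
  intro X Y Z
  set A := X.biUnion D with hA
  set B := Y.biUnion D with hB
  set C := Z.biUnion D with hC
  have hbu : ∀ s t : Finset α, (s ∪ t).biUnion D = s.biUnion D ∪ t.biUnion D := by
    intro s t; ext b; simp [Finset.mem_biUnion, or_and_right, exists_or]
  have hXZ : (X ∪ Z).biUnion D = A ∪ C := hbu _ _
  have hYZ : (Y ∪ Z).biUnion D = B ∪ C := hbu _ _
  have hXYZ : (X ∪ Y ∪ Z).biUnion D = A ∪ B ∪ C := by rw [hbu, hbu]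
  rw [hXZ, hYZ, hXYZ]
  have hinter : (A ∪ C) ∩ (B ∪ C) = (A ∩ B) ∪ C := by ext b; simp; tauto
  have hkey : (A ∪ C).card + (B ∪ C).card = (A ∪ B ∪ C).card + ((A ∩ B) ∪ C).card := by
    have h1 : (A ∪ C) ∪ (B ∪ C) = A ∪ B ∪ C := by ext b; simp; tauto
    rw [← hinter, ← h1]
    exact (Finset.card_union_add_card_inter _ _).symm
  have hsub : C ⊆ (A ∩ B) ∪ C := Finset.subset_union_right
  constructor
  · intro h
    have hcard : ((A ∩ B) ∪ C).card = C.card := by omega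
    have heq : (A ∩ B) ∪ C = C :=
      (Finset.eq_of_subset_of_card_le hsub (le_of_eq hcard)).symm
    intro x hx
    rw [← heq]
    exact Finset.mem_union_left _ hx
  · intro h
    have heq : (A ∩ B) ∪ C = C := Finset.union_eq_right.mpr h
    have := hkey
    rw [heq] at this
    omega
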